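/- Let Z be a nonempty subset of a real vector space V, and let ≿ be a preorder on Z satisfying strong independence (for α ∈ (0,1) and x, y, z ∈ Z with the relevant mixtures lying in Z, x ≿ y iff αx + (1-α)z ≿ αy + (1-α)z). Assume Z is convex. Then the set C = {λ(x - y) : λ > 0, x, y ∈ Z, x ≿ y} is a convex cone in V. -/

import Mathlib

def IsConvexCone {V : Type*} [AddCommGroup V] [Module ℝ V] (C : Set V) : Prop :=
  (0 : V) ∈ C ∧ (∀ x ∈ C, ∀ y ∈ C, x + y ∈ C) ∧ ∀ (l : ℝ), 0 < l → ∀ x ∈ C, l • x ∈ C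

theorem cone_of_strong_independence {V : Type*} [AddCommGroup V] [Module ℝ V]
    (Z : Set V) (hne : Z.Nonempty) (hconv : Convex ℝ Z) (r : V → V → Prop)
    (hrefl : ∀ x ∈ Z, r x x)
    (htrans : ∀ x ∈ Z, ∀ y ∈ Z, ∀ z ∈ Z, r x y → r y z → r x z)
    (hSI : ∀ (a : ℝ), 0 < a → a < 1 → ∀ x ∈ Z, ∀ y ∈ Z, ∀ z ∈ Z,
      (r x y ↔ r (a • x + (1 - a) • z) (a • y + (1 - a) • z))) :
    IsConvexCone {v : V | ∃ (l : ℝ) (x y : V),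
      0 < l ∧ x ∈ Z ∧ y ∈ Z ∧ r x y ∧ v = l • (x - y)} := by
  obtain ⟨z0, hz0⟩ := hne
  refine ⟨⟨1, z0, z0, one_pos, hz0, hz0, hrefl z0 hz0, by simp⟩, ?_, ?_⟩
  · rintro v ⟨l, x, y, hl, hx, hy, hxy, rfl⟩ w ⟨m, x', y', hm, hx', hy', hxy', rfl⟩
    set a : ℝ := l / (l + m) with ha
    have hlm : 0 < l + m := by linarith
    have ha0 : 0 < a := div_pos hl hlm
    have ha1 : a < 1 := (div_lt_one hlm).mpr (by linarith)
    have h1a : (1 : ℝ) - a = m / (l + m) := by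
      rw [ha]; field_simp; ring
    have hp : a • x + (1 - a) • x' ∈ Z :=
      hconv hx hx' ha0.le (by linarith) (by ring)
    have hq : a • y + (1 - a) • x' ∈ Z :=
      hconv hy hx' ha0.le (by linarith) (by ring)
    have hs : a • y + (1 - a) • y' ∈ Z :=
      hconv hy hy' ha0.le (by linarith) (by ring)
    have h1 : r (a • x + (1 - a) • x') (a • y + (1 - a) • x') :=
      (hSI a ha0 ha1 x hx y hy x' hx').mp hxy
    have h2 : r (a • y + (1 - a) • x') (a • y + (1 - a) • y') := by
      have := (hSI (1 - a) (by linarith) (by linarith) x' hx' y' hy' y hy).mp hxy'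
      simpa [sub_sub_cancel, add_comm] using this
    have h3 : r (a • x + (1 - a) • x') (a • y + (1 - a) • y') :=
      htrans _ hp _ hq _ hs h1 h2
    refine ⟨l + m, _, _, hlm, hp, hs, h3, ?_⟩
    have hane : (l + m : ℝ) ≠ 0 := hlm.ne'
    rw [ha]
    match_scalars <;> field_simp <;> ring
  · rintro l hl v ⟨m, x, y, hm, hx, hy, hxy, rfl⟩
    exact ⟨l * m, x, y, mul_pos hl hm, hx, hy, hxy, by rw [smul_smul]⟩
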